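/- Fix d_s ≥ σ_w². There exists k₀ > 0 such that for all integers k > k₀ and all t satisfying 2ζ/√k ≤ t ≤ 1, every θ ≥ 0 with θ ≤ d_s − σ_w² − δ_s(t,k) satisfies θ + σ_w² ≤ d_s − √((4σ_w²θ + σ_{w²}²)/k) · Q⁻¹(t − ζ/√k). -/
import Mathlib


open MeasureTheory ProbabilityTheory

/-- The standard Gaussian complementary CDF `Q(x) = γ((x,∞))`. -/
noncomputable def gaussQ (x : ℝ) : ℝ := ((gaussianReal 0 1) (Set.Ioi x)).toReal

/-- The inverse of the standard Gaussian complementary CDF on `(0,1)`. -/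
noncomputable def gaussQinv : ℝ → ℝ := Function.invFun gaussQ

/-- Lemma 1 of the paper: Fix `d_s ≥ σ_w²`. There exists `k₀ > 0` such that for
all integers `k > k₀` and all `t` with `2ζ/√k ≤ t ≤ 1`, every `θ ≥ 0` with
`θ ≤ d_s − σ_w² − δ_s(t,k)` satisfies
`θ + σ_w² ≤ d_s − √((4σ_w²θ + σ_{w²}²)/k) · Q⁻¹(t − ζ/√k)`,
where `δ_s(t,k) = √(V₁/k)·Q⁻¹(t − ζ/√k)` and `V₁ = 4σ_w²(d_s − σ_w²) + σ_{w²}²`. -/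
theorem stmt_2 (σw σw2 ζ ds : ℝ) (hσw : 0 < σw) (hσw2 : 0 < σw2) (hζ : 0 < ζ)
    (hds : σw ^ 2 ≤ ds) :
    ∃ k₀ : ℕ, 0 < k₀ ∧ ∀ k : ℕ, k₀ < k → ∀ t : ℝ,
      2 * ζ / Real.sqrt k ≤ t → t ≤ 1 → ∀ θ : ℝ, 0 ≤ θ →
      θ ≤ ds - σw ^ 2 -
          Real.sqrt ((4 * σw ^ 2 * (ds - σw ^ 2) + σw2 ^ 2) / k) *
            gaussQinv (t - ζ / Real.sqrt k) →
      θ + σw ^ 2 ≤ ds -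
          Real.sqrt ((4 * σw ^ 2 * θ + σw2 ^ 2) / k) * gaussQinv (t - ζ / Real.sqrt k) := by
  refine ⟨1, one_pos, fun k hk t ht1 ht2 θ hθ hθle => ?_⟩
  set q := gaussQinv (t - ζ / Real.sqrt k) with hq
  have hk0 : (0:ℝ) < (k:ℝ) := by exact_mod_cast Nat.pos_of_ne_zero (by omega)
  set a := Real.sqrt ((4 * σw ^ 2 * (ds - σw ^ 2) + σw2 ^ 2) / k) with ha'
  set b := Real.sqrt ((4 * σw ^ 2 * θ + σw2 ^ 2) / k) with hb'
  have ha : 0 ≤ a := Real.sqrt_nonneg _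
  have hb : 0 ≤ b := Real.sqrt_nonneg _
  rcases le_or_gt 0 q with hq0 | hq0
  · have hθds : θ ≤ ds - σw ^ 2 := le_trans hθle (by nlinarith [mul_nonneg ha hq0])
    have hba : b ≤ a := by
      apply Real.sqrt_le_sqrt
      gcongr
    nlinarith [mul_le_mul_of_nonneg_right hba hq0]
  · rcases le_or_gt θ (ds - σw ^ 2) with h1 | h1
    · nlinarith [mul_nonneg hb (neg_nonneg.mpr hq0.le)]
    · have hab : a ≤ b := by
        apply Real.sqrt_le_sqrt
        gcongr
      nlinarith [mul_nonneg (sub_nonneg.mpr hab) (neg_nonneg.mpr hq0.le)]
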